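/- For every n ≥ 1 and every k ∈ Comp(n,n), the asymmetric multinomial coefficient ⟨⟨n;k⟩⟩ is nonzero if and only if k is Catalan. -/

import Mathlib

open Finset

/-- The operation k ↦ k̃_j (0-based index `j`): decrease the `j`-th entry by 1,
then delete the leftmost zero entry of the resulting tuple. -/
def ktilde (k : List ℕ) (j : ℕ) : List ℕ :=
  (k.set j (k.getD j 0 - 1)).erase 0

/-- The asymmetric multinomial coefficient ⟨⟨n;k⟩⟩, defined by ⟨⟨1;(1)⟩⟩ = 1 and
⟨⟨n;k⟩⟩ = Σ_{j=1}^{i_k-1} ⟨⟨n-1;k̃_j⟩⟩, where i_k is the (1-based) position of the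
leftmost zero of k (i_k = n+1 if there is no zero), so that the sum has
`k.idxOf 0` terms (0-based j). -/
def amc : ℕ → List ℕ → ℕ
  | 0, _ => 0
  | 1, k => if k = [1] then 1 else 0
  | n + 2, k => ∑ j ∈ Finset.range (k.idxOf 0), amc (n + 1) (ktilde k j)

/-- `f : Fin n → Fin n` (0-based labels and columns) is a parking function:
for every `i ≤ n` at least `i` labels lie in the first `i` columns. -/
def IsParking (n : ℕ) (f : Fin n → Fin n) : Prop :=
  ∀ i : ℕ, i ≤ n → i ≤ (univ.filter fun a => (f a : ℕ) < i).card

/-- The dominance index of the label `a`: the number of columns strictly to the left of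
`a`'s column containing no label greater than `a`. -/
def domIndex {n : ℕ} (f : Fin n → Fin n) (a : Fin n) : ℕ :=
  (univ.filter fun c : Fin n => c < f a ∧ ∀ b, f b = c → b < a).card

/-- Column-restricted parking function: every (1-based) label `a+1` satisfies
`d_f(a) < a+1`. -/
def IsCPF (n : ℕ) (f : Fin n → Fin n) : Prop :=
  IsParking n f ∧ ∀ a : Fin n, domIndex f a < (a : ℕ) + 1

/-- The list of column heights of `f`. -/
def colHeights {n : ℕ} (f : Fin n → Fin n) : List ℕ :=
  List.ofFn fun c : Fin n => (univ.filter fun a => f a = c).card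

/-- The number of column-restricted parking functions of size `n`. -/
noncomputable def cpfCount (n : ℕ) : ℕ := Nat.card {f : Fin n → Fin n // IsCPF n f}

/-- The number of column-restricted parking functions of size `n` with column heights `k`. -/
noncomputable def cpfCountWith (n : ℕ) (k : List ℕ) : ℕ :=
  Nat.card {f : Fin n → Fin n // IsCPF n f ∧ colHeights f = k}

/-- A composition `k` of `n` of length `n` is Catalan if `k_1 + ⋯ + k_j ≥ j` for all `j < n`. -/
def IsCatalan (n : ℕ) (k : List ℕ) : Prop :=
  ∀ j < n, j ≤ (k.take j).sum


def psum (l : List ℕ) (i : ℕ) : ℕ := (l.take i).sum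

lemma psum_append (A B : List ℕ) (i : ℕ) :
    psum (A ++ B) i = psum A i + psum B (i - A.length) := by
  simp [psum, List.take_append]

lemma psum_cons_succ (x : ℕ) (B : List ℕ) (s : ℕ) :
    psum (x :: B) (s + 1) = x + psum B s := by
  simp [psum]

lemma psum_cons_zero' (x : ℕ) (B : List ℕ) (s : ℕ) (h : 1 ≤ s) :
    psum (x :: B) s = x + psum B (s - 1) := by
  obtain ⟨t, rfl⟩ := Nat.exists_eq_add_of_le h
  rw [Nat.add_comm]; exact psum_cons_succ x B t

lemma psum_of_ge (l : List ℕ) (i : ℕ) (h : l.length ≤ i) : psum l i = l.sum := by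
  simp [psum, List.take_of_length_le h]

lemma psum_succ (l : List ℕ) (i : ℕ) : psum l (i + 1) = psum l i + l.getD i 0 := by
  rcases lt_or_ge i l.length with h | h
  · rw [psum, psum, List.take_succ, List.sum_append, List.getD_eq_getElem l 0 h]
    simp [List.getElem?_eq_getElem h]
  · rw [psum_of_ge l i h, psum_of_ge l (i+1) (le_trans h (Nat.le_succ i)),
      List.getD_eq_default]
    · simp
    · exact h

lemma length_le_sum_of_not_mem (l : List ℕ) (h : 0 ∉ l) : l.length ≤ l.sum := by
  induction l with
  | nil => simp
  | cons x t ih =>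
    simp only [List.mem_cons, not_or] at h
    have hx : 1 ≤ x := Nat.one_le_iff_ne_zero.mpr (fun hh => h.1 hh.symm)
    have := ih h.2
    simp only [List.length_cons, List.sum_cons]
    omega

lemma indexOf_zero_append (A L : List ℕ) (hA : (0:ℕ) ∉ A) :
    (A ++ L).idxOf 0 = A.length + L.idxOf 0 :=
  List.idxOf_append_of_notMem hA

lemma not_mem_take_indexOf (l : List ℕ) (s : ℕ) (h : s ≤ l.idxOf 0) :
    (0:ℕ) ∉ l.take s := by
  induction l generalizing s with
  | nil => simp
  | cons x t ih =>
    cases s with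
    | zero => simp
    | succ s =>
      by_cases hx : x = 0
      · subst hx; simp [List.idxOf_cons_eq] at h
      · rw [List.idxOf_cons_ne _ (fun hh : x = 0 => hx hh)] at h
        simp only [List.take_succ_cons, List.mem_cons, not_or]
        exact ⟨fun hh => hx hh.symm, ih s (by omega)⟩

lemma getD_ne_zero_of_lt_indexOf (l : List ℕ) (i : ℕ) (hi : i < l.idxOf 0) :
    l.getD i 0 ≠ 0 := by
  have hlen : i < l.length := lt_of_lt_of_le hi List.idxOf_le_length
  have h := not_mem_take_indexOf l (i + 1) hi
  intro h0
  apply h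
  have : (l.take (i+1)).get ⟨i, by simp [hlen]⟩ ∈ l.take (i + 1) := List.get_mem _ _
  rw [List.get_eq_getElem] at this
  rw [List.getElem_take] at this
  rw [List.getD_eq_getElem l 0 hlen] at h0
  rwa [h0] at this

lemma indexOf_zero_le_of_getD (l : List ℕ) (i : ℕ) (h : i < l.length)
    (h0 : l.getD i 0 = 0) : l.idxOf 0 ≤ i := by
  by_contra hc
  exact getD_ne_zero_of_lt_indexOf l i (by omega) h0

lemma split_at_zero (B : List ℕ) (h : (0:ℕ) ∈ B) :
    ∃ C D : List ℕ, B = C ++ 0 :: D ∧ (0:ℕ) ∉ C := by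
  induction B with
  | nil => simp at h
  | cons x t ih =>
    by_cases hx : x = 0
    · exact ⟨[], t, by simp [hx], by simp⟩
    · have : (0:ℕ) ∈ t := by
        rcases List.mem_cons.mp h with h1 | h1
        · exact absurd h1.symm hx
        · exact h1
      obtain ⟨C, D, h1, h2⟩ := ih this
      exact ⟨x :: C, D, by simp [h1], by simp only [List.mem_cons, not_or]; exact ⟨fun hh => hx hh.symm, h2⟩⟩

lemma ktilde_spec (k : List ℕ) (j : ℕ) (hsum : k.sum = k.length) (hj : j < k.idxOf 0) :
    (ktilde k j).length + 1 = k.length ∧ (ktilde k j).sum + 1 = k.sum ∧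
    (∀ i ≤ j, psum (ktilde k j) i = psum k i) ∧
    (∀ i, k.idxOf 0 ≤ i → psum (ktilde k j) i + 1 = psum k (i + 1)) := by
  have hjlen : j < k.length := lt_of_lt_of_le hj List.idxOf_le_length
  set a := k.getD j 0 with ha_def
  have ha : a ≠ 0 := getD_ne_zero_of_lt_indexOf k j hj
  set A := k.take j with hA_def
  set B := k.drop (j + 1) with hB_def
  have hA0 : (0:ℕ) ∉ A := not_mem_take_indexOf k j (le_of_lt hj)
  have hAlen : A.length = j := by
    rw [hA_def, List.length_take]; omega
  have hk : k = A ++ a :: B := by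
    rw [ha_def, List.getD_eq_getElem k 0 hjlen]
    conv_lhs => rw [← List.take_append_drop j k]
    rw [List.drop_eq_getElem_cons hjlen]
  have hset : ktilde k j = (A ++ (a - 1) :: B).erase 0 := by
    simp only [ktilde]
    rw [← ha_def, List.set_eq_take_cons_drop _ hjlen]
  by_cases h1 : a = 1
  · -- ktilde k j = A ++ B
    have hkt : ktilde k j = A ++ B := by
      rw [hset, h1]
      rw [List.erase_append_right _ hA0]
      norm_num
    have hlen1 : (ktilde k j).length + 1 = k.length := by
      rw [hkt, hk]; simp [h1]; omega
    have hsum1 : (ktilde k j).sum + 1 = k.sum := by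
      rw [hkt]; conv_rhs => rw [hk]
      simp [h1]; omega
    refine ⟨hlen1, hsum1, ?_, ?_⟩
    · intro i hi
      rw [hkt]; conv_rhs => rw [hk]
      rw [psum_append, psum_append, hAlen]
      have : i - j = 0 := by omega
      rw [this]
      simp [psum]
    · intro i hi
      have hij : j ≤ i := by omega
      rw [hkt]; conv_rhs => rw [hk]
      rw [psum_append, psum_append, hAlen]
      have h2 : i + 1 - j = (i - j) + 1 := by omega
      rw [h2, psum_cons_succ, h1]
      have : psum A i = psum A (i + 1) := by
        rw [psum_of_ge _ _ (by omega), psum_of_ge _ _ (by omega)]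
      omega
  · -- a ≥ 2
    have ha2 : 2 ≤ a := by omega
    have hmem : (0:ℕ) ∈ B := by
      by_contra hB0
      have hkmem : (0:ℕ) ∉ k := by
        rw [hk]
        simp only [List.mem_append, List.mem_cons, not_or]
        exact ⟨hA0, fun h => ha h.symm, hB0⟩
      have h3 : k.length ≤ A.length + 1 + B.length := by rw [hk]; simp; omega
      have h4 := length_le_sum_of_not_mem A hA0
      have h5 := length_le_sum_of_not_mem B hB0
      have h6 : k.sum = A.sum + a + B.sum := by rw [hk]; simp; omega
      omega
    obtain ⟨C, D, hCD, hC0⟩ := split_at_zero B hmem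
    have hkt : ktilde k j = A ++ (a - 1) :: (C ++ D) := by
      rw [hset, hCD]
      rw [List.erase_append_right _ hA0]
      rw [List.erase_cons_tail (by simp only [beq_iff_eq]; omega)]
      rw [List.erase_append_right _ hC0]
      simp
    have hm : k.idxOf 0 = j + 1 + C.length := by
      rw [hk, hCD]
      rw [indexOf_zero_append _ _ hA0, hAlen]
      rw [show (a :: (C ++ 0 :: D)) = [a] ++ (C ++ 0 :: D) by simp]
      rw [indexOf_zero_append _ _ (by simp only [List.mem_singleton]; exact fun h => ha h.symm)]
      rw [indexOf_zero_append _ _ hC0]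
      simp [List.idxOf_cons_eq]
      omega
    have hlen1 : (ktilde k j).length + 1 = k.length := by
      rw [hkt, hk, hCD]; simp; omega
    have hsum1 : (ktilde k j).sum + 1 = k.sum := by
      rw [hkt]; conv_rhs => rw [hk, hCD]
      simp; omega
    refine ⟨hlen1, hsum1, ?_, ?_⟩
    · intro i hi
      rw [hkt]; conv_rhs => rw [hk]
      rw [psum_append, psum_append, hAlen]
      have : i - j = 0 := by omega
      rw [this]
      simp [psum]
    · intro i hi
      rw [hm] at hi
      rw [hkt]; conv_rhs => rw [hk, hCD]
      rw [psum_append, psum_append, hAlen]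
      have h2 : i + 1 - j = (i - j) + 1 := by omega
      rw [h2, psum_cons_succ]
      rw [psum_cons_zero' _ _ _ (by omega)]
      rw [psum_append, psum_append]
      rw [psum_of_ge C (i - j - 1) (by omega), psum_of_ge C (i - j) (by omega)]
      rw [psum_cons_zero' _ _ _ (by omega)]
      rw [psum_of_ge A i (by omega), psum_of_ge A (i + 1) (by omega)]
      have hD : i - j - 1 - C.length = i - j - C.length - 1 := by omega
      rw [hD]
      omega

lemma psum_def (l : List ℕ) (i : ℕ) : (l.take i).sum = psum l i := rfl

lemma one_le_indexOf_zero (l : List ℕ) (h : l.getD 0 0 ≠ 0) : 1 ≤ l.idxOf 0 := by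
  cases l with
  | nil => simp at h
  | cons x t =>
    simp only [List.getD_cons_zero] at h
    rw [List.idxOf_cons_ne _ (by exact h)]
    omega

lemma forward_cat (N : ℕ) (k : List ℕ) (hlen : k.length = N) (hsum : k.sum = N)
    (j : ℕ) (hj : j < k.idxOf 0) (hcat' : IsCatalan (N - 1) (ktilde k j)) :
    IsCatalan N k := by
  obtain ⟨hl, hs, hps1, hps2⟩ := ktilde_spec k j (hsum.trans hlen.symm) hj
  have H : ∀ t, t < N → t ≤ psum k t := by
    intro t
    induction t using Nat.strong_induction_on with
    | _ t IH =>
      intro ht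
      by_contra hlt
      have ht0 : t ≠ 0 := by rintro rfl; exact hlt (Nat.zero_le _)
      have hprev : t - 1 ≤ psum k (t - 1) := IH (t - 1) (by omega) (by omega)
      have hstep : psum k t = psum k (t - 1) + k.getD (t - 1) 0 := by
        have h := psum_succ k (t - 1)
        rw [show t - 1 + 1 = t by omega] at h
        exact h
      have hz : k.getD (t - 1) 0 = 0 := by omega
      have hmt : k.idxOf 0 ≤ t - 1 := indexOf_zero_le_of_getD k (t - 1) (by omega) hz
      have h2 := hps2 (t - 1) hmt
      rw [show t - 1 + 1 = t by omega] at h2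
      have h3 := hcat' (t - 1) (by omega)
      rw [psum_def] at h3
      omega
  intro t ht
  rw [psum_def]
  exact H t ht

lemma backward_cat (N : ℕ) (k : List ℕ) (hN : 2 ≤ N) (hlen : k.length = N)
    (hsum : k.sum = N) (hcat : IsCatalan N k) :
    ∃ j < k.idxOf 0, IsCatalan (N - 1) (ktilde k j) := by
  have hm1 : 1 ≤ k.idxOf 0 := by
    apply one_le_indexOf_zero
    have h1 := hcat 1 (by omega)
    rw [psum_def] at h1
    have h2 : psum k 1 = k.getD 0 0 := by
      have := psum_succ k 0
      simpa [psum] using this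
    omega
  set j := k.idxOf 0 - 1 with hj_def
  have hj : j < k.idxOf 0 := by omega
  obtain ⟨hl, hs, hps1, hps2⟩ := ktilde_spec k j (hsum.trans hlen.symm) hj
  refine ⟨j, hj, ?_⟩
  intro i hi
  rw [psum_def]
  rcases le_or_gt i j with hij | hij
  · rw [hps1 i hij]
    have := hcat i (by omega)
    rwa [psum_def] at this
  · have hmi : k.idxOf 0 ≤ i := by omega
    have h2 := hps2 i hmi
    have h3 := hcat (i + 1) (by omega)
    rw [psum_def] at h3
    omega

lemma amc_ne_zero_iff : ∀ n : ℕ, 1 ≤ n → ∀ k : List ℕ, k.length = n → k.sum = n →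
    (amc n k ≠ 0 ↔ IsCatalan n k) := by
  intro n
  induction n with
  | zero => omega
  | succ n ih =>
    intro hn k hlen hsum
    cases n with
    | zero =>
      obtain ⟨x, rfl⟩ := List.length_eq_one_iff.mp hlen
      have hx : x = 1 := by simpa using hsum
      subst hx
      constructor
      · intro _ t ht
        have : t = 0 := by omega
        subst this
        simp
      · intro _
        simp [amc]
    | succ m =>
      have hamc : amc (m + 2) k = ∑ i ∈ Finset.range (k.idxOf 0), amc (m + 1) (ktilde k i) := rfl
      have key : ∀ i, i < k.idxOf 0 →
          (amc (m + 1) (ktilde k i) ≠ 0 ↔ IsCatalan (m + 1) (ktilde k i)) := by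
        intro i hi
        obtain ⟨hl, hs, _, _⟩ := ktilde_spec k i (hsum.trans hlen.symm) hi
        exact ih (by omega) _ (by omega) (by omega)
      constructor
      · intro hne
        have hex : ∃ i ∈ Finset.range (k.idxOf 0), amc (m + 1) (ktilde k i) ≠ 0 := by
          by_contra hc
          push_neg at hc
          exact hne (hamc.trans (Finset.sum_eq_zero hc))
        obtain ⟨i, himem, hterm⟩ := hex
        rw [Finset.mem_range] at himem
        have hcat' := (key i himem).mp hterm
        exact forward_cat (m + 2) k hlen hsum i himem (by simpa using hcat')
      · intro hcat
        obtain ⟨i, hi, hcat'⟩ := backward_cat (m + 2) k (by omega) hlen hsum hcat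
        have hterm : amc (m + 1) (ktilde k i) ≠ 0 := (key i hi).mpr (by simpa using hcat')
        rw [hamc]
        intro hzero
        rw [Finset.sum_eq_zero_iff] at hzero
        exact hterm (hzero i (Finset.mem_range.mpr hi))


/-- For every n ≥ 1 and k ∈ Comp(n,n), ⟨⟨n;k⟩⟩ ≠ 0 iff k is Catalan. -/
theorem statement5 (n : ℕ) (hn : 1 ≤ n) (k : List ℕ)
    (hlen : k.length = n) (hsum : k.sum = n) :
    amc n k ≠ 0 ↔ IsCatalan n k := amc_ne_zero_iff n hn k hlen hsum
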